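/- Let F_i denote the i-th ordered Bell number. Then the sequence i ↦ 2·F_i·(ln 2)^{i+1}/i! (as real numbers) converges to 1 as i → ∞; that is, F_i is asymptotic to i!/(2·(ln 2)^{i+1}). -/

import Mathlib

open Finset Real Set Filter MeasureTheory

open Finset

noncomputable def surjCount (i k : ℕ) : ℕ :=
  Nat.card {f : Fin i → Fin k // Function.Surjective f}

lemma surjCount_eq_card (i k : ℕ) :
    surjCount i k = Fintype.card {f : Fin i → Fin k // Function.Surjective f} :=
  Nat.card_eq_fintype_card

/-- surjection-count subtype transported along an equiv of codomains -/
def surjEquiv {α β : Type*} (e : α ≃ β) (i : ℕ) :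
    {f : Fin i → α // Function.Surjective f} ≃ {f : Fin i → β // Function.Surjective f} :=
  (Equiv.arrowCongr (Equiv.refl (Fin i)) e).subtypeEquiv fun f => by
    constructor
    · intro h; exact e.surjective.comp h
    · intro h
      have : f = e.symm ∘ (Equiv.arrowCongr (Equiv.refl (Fin i)) e) f := by
        funext x; simp [Equiv.arrowCongr]
      rw [this]; exact e.symm.surjective.comp h

lemma surjCount_congr {i : ℕ} {α : Type*} [Fintype α] [DecidableEq α] (e : α ≃ Fin (Fintype.card α)) :
    Fintype.card {f : Fin i → α // Function.Surjective f} = surjCount i (Fintype.card α) := by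
  rw [surjCount_eq_card]
  exact Fintype.card_congr (surjEquiv e i)

def fiberEquiv {i k : ℕ} (s : Finset (Fin k)) :
    {f : Fin i → Fin k // Finset.image f Finset.univ = s} ≃
      {g : Fin i → {x // x ∈ s} // Function.Surjective g} where
  toFun := fun ⟨f, hf⟩ => ⟨fun x => ⟨f x, hf ▸ Finset.mem_image_of_mem f (Finset.mem_univ x)⟩,
    fun ⟨y, hy⟩ => by
      rw [← hf] at hy
      obtain ⟨x, -, hx⟩ := Finset.mem_image.mp hy
      exact ⟨x, Subtype.ext hx⟩⟩
  invFun := fun ⟨g, hg⟩ => ⟨fun x => (g x : Fin k), by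
    ext y
    simp only [Finset.mem_image, Finset.mem_univ, true_and]
    constructor
    · rintro ⟨x, rfl⟩; exact (g x).2
    · intro hy; obtain ⟨x, hx⟩ := hg ⟨y, hy⟩; exact ⟨x, by rw [hx]⟩⟩
  left_inv := fun ⟨f, hf⟩ => rfl
  right_inv := fun ⟨g, hg⟩ => by
    apply Subtype.ext
    funext x
    apply Subtype.ext
    rfl

lemma pow_eq_sum_choose_mul_surjCount (i k : ℕ) :
    k ^ i = ∑ j ∈ range (k + 1), k.choose j * surjCount i j := by
  classical
  have h1 : k ^ i = Fintype.card (Fin i → Fin k) := by simp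
  have h2 : Fintype.card (Fin i → Fin k)
      = ∑ s : Finset (Fin k), Fintype.card {f : Fin i → Fin k // Finset.image f Finset.univ = s} := by
    rw [← Fintype.card_sigma]
    exact Fintype.card_congr (Equiv.sigmaFiberEquiv fun f => Finset.image f Finset.univ).symm
  have h3 : ∀ s : Finset (Fin k),
      Fintype.card {f : Fin i → Fin k // Finset.image f Finset.univ = s} = surjCount i s.card := by
    intro s
    rw [Fintype.card_congr (fiberEquiv s)]
    have : Fintype.card {x // x ∈ s} = s.card := Fintype.card_coe s
    rw [← this]
    exact surjCount_congr ((Fintype.equivFin _))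
  rw [h1, h2]
  simp_rw [h3]
  rw [← Finset.powerset_univ, Finset.sum_powerset]
  have : (Finset.univ : Finset (Fin k)).card = k := by simp
  rw [this]
  refine Finset.sum_congr rfl fun j hj => ?_
  rw [Finset.sum_congr rfl (fun s hs => by
    rw [(Finset.mem_powersetCard.mp hs).2]), Finset.sum_const, smul_eq_mul]
  congr 1
  rw [Finset.card_powersetCard]
  simp

/-- The `i`-th ordered Bell (Fubini) number: the total number of surjective functions
from `Fin i` onto `Fin k`, summed over `0 ≤ k ≤ i`. -/
noncomputable def orderedBell (i : ℕ) : ℕ :=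
  ∑ k ∈ Finset.range (i + 1), Nat.card {f : Fin i → Fin k // Function.Surjective f}

lemma surjCount_eq_zero {i k : ℕ} (h : i < k) : surjCount i k = 0 := by
  rw [surjCount_eq_card, Fintype.card_eq_zero_iff]
  constructor
  rintro ⟨f, hf⟩
  have := Fintype.card_le_of_surjective f hf
  simp only [Fintype.card_fin] at this
  omega

lemma pow_eq_sum_choose_mul_surjCount' (i k : ℕ) :
    k ^ i = ∑ j ∈ range (i + 1), k.choose j * surjCount i j := by
  rw [pow_eq_sum_choose_mul_surjCount i k]
  rcases le_total k i with h | h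
  · apply Finset.sum_subset (by intro x hx; simp only [Finset.mem_range] at *; omega)
    intro x hx hx2
    simp only [Finset.mem_range] at hx hx2
    rw [Nat.choose_eq_zero_of_lt (by omega), zero_mul]
  · symm
    apply Finset.sum_subset (by intro x hx; simp only [Finset.mem_range] at *; omega)
    intro x hx hx2
    simp only [Finset.mem_range] at hx hx2
    rw [surjCount_eq_zero (by omega), mul_zero]

lemma orderedBell_eq_sum (i : ℕ) : orderedBell i = ∑ j ∈ range (i + 1), surjCount i j := by
  unfold orderedBell
  refine Finset.sum_congr rfl fun j _ => ?_
  rw [surjCount_eq_card, Nat.card_eq_fintype_card]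

lemma hasSum_choose_half (j : ℕ) :
    HasSum (fun k : ℕ => (k.choose j : ℝ) * (1 / 2) ^ (k + 1)) 1 := by
  have hr : ‖(1/2 : ℝ)‖ < 1 := by rw [Real.norm_eq_abs, abs_of_nonneg (by norm_num)]; norm_num
  have h := hasSum_choose_mul_geometric_of_norm_lt_one j hr
  have h2 := h.mul_left ((1/2 : ℝ) ^ (j + 1))
  have h3 : HasSum (fun n : ℕ => (((n + j).choose j : ℝ)) * (1/2) ^ (n + j + 1))
      ((1/2 : ℝ) ^ (j+1) * (1 / (1 - 1/2) ^ (j+1))) := by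
    convert h2 using 2 with n
    · rfl
    ring
  have hval : ((1/2 : ℝ) ^ (j+1) * (1 / (1 - 1/2) ^ (j+1))) = 1 := by
    norm_num
  rw [hval] at h3
  have := (hasSum_nat_add_iff (f := fun k : ℕ => (k.choose j : ℝ) * (1 / 2) ^ (k + 1)) j).mp
    (by exact h3)
  convert this using 1
  · rfl
  rw [Finset.sum_eq_zero, add_zero]
  intro x hx
  simp only [Finset.mem_range] at hx
  rw [Nat.choose_eq_zero_of_lt hx]
  simp

lemma hasSum_orderedBell (i : ℕ) :
    HasSum (fun k : ℕ => (k : ℝ) ^ i * (1 / 2) ^ (k + 1)) (orderedBell i) := by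
  have h : ∀ k : ℕ, (k : ℝ) ^ i * (1 / 2) ^ (k + 1)
      = ∑ j ∈ range (i + 1), (surjCount i j : ℝ) * ((k.choose j : ℝ) * (1 / 2) ^ (k + 1)) := by
    intro k
    have := pow_eq_sum_choose_mul_surjCount' i k
    have hcast : ((k : ℝ)) ^ i = ∑ j ∈ range (i + 1), (k.choose j : ℝ) * (surjCount i j : ℝ) := by
      exact_mod_cast congrArg (Nat.cast : ℕ → ℝ) this
    rw [hcast, Finset.sum_mul]
    refine Finset.sum_congr rfl fun j _ => by ring
  have h2 : HasSum (fun k : ℕ => ∑ j ∈ range (i + 1),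
      (surjCount i j : ℝ) * ((k.choose j : ℝ) * (1 / 2) ^ (k + 1)))
      (∑ j ∈ range (i + 1), (surjCount i j : ℝ) * 1) :=
    hasSum_sum fun j _ => (hasSum_choose_half j).mul_left _
  simp_rw [← h] at h2
  convert h2 using 1
  rw [orderedBell_eq_sum]
  push_cast
  simp

noncomputable def psi (i : ℕ) (t : ℝ) : ℝ :=
  Real.log 2 ^ (i + 1) / (Nat.factorial i) * (t ^ i * Real.exp (-(Real.log 2 * t)))

lemma hc : 0 < Real.log 2 := Real.log_pos (by norm_num)

lemma psi_nonneg (i : ℕ) {t : ℝ} (ht : 0 ≤ t) : 0 ≤ psi i t := by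
  unfold psi
  have := hc
  positivity

lemma continuous_psi (i : ℕ) : Continuous (psi i) := by
  unfold psi
  continuity

lemma hasDerivAt_psi (i : ℕ) (t : ℝ) :
    HasDerivAt (psi i)
      (Real.log 2 ^ (i + 1) / (Nat.factorial i) *
        (((i : ℝ) * t ^ (i - 1) - Real.log 2 * t ^ i) * Real.exp (-(Real.log 2 * t)))) t := by
  have h2 : HasDerivAt (fun t : ℝ => Real.exp (-(Real.log 2 * t)))
      (Real.exp (-(Real.log 2 * t)) * (-(Real.log 2 * 1))) t :=
    (((hasDerivAt_id t).const_mul (Real.log 2)).neg).exp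
  have h3 := (hasDerivAt_pow i t).mul h2
  have h4 := h3.const_mul (Real.log 2 ^ (i + 1) / (Nat.factorial i))
  convert h4 using 1
  · rfl
  · rfl
  · rfl
  ring

lemma deriv_psi (i : ℕ) (t : ℝ) :
    deriv (psi i) t = Real.log 2 ^ (i + 1) / (Nat.factorial i) *
        (((i : ℝ) * t ^ (i - 1) - Real.log 2 * t ^ i) * Real.exp (-(Real.log 2 * t))) :=
  (hasDerivAt_psi i t).deriv

lemma psi_monotoneOn (i : ℕ) :
    MonotoneOn (psi i) (Set.Icc 0 ((i : ℝ) / Real.log 2)) := by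
  apply monotoneOn_of_deriv_nonneg (convex_Icc _ _) (continuous_psi i).continuousOn
    (fun x _ => ((hasDerivAt_psi i x).differentiableAt).differentiableWithinAt)
  intro x hx
  rw [interior_Icc, Set.mem_Ioo] at hx
  obtain ⟨hx0, hxi⟩ := hx
  rw [deriv_psi]
  have hplus : Real.log 2 * x ^ i ≤ (i : ℝ) * x ^ (i - 1) := by
    rcases Nat.eq_zero_or_pos i with h | h
    · subst h
      simp at hxi
      nlinarith [hc]
    · have hxpow : x ^ i = x * x ^ (i - 1) := by
        conv_lhs => rw [show i = 1 + (i - 1) by omega]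
        rw [pow_add, pow_one]
      have h1 : Real.log 2 * x ≤ i := by
        rw [lt_div_iff₀ hc] at hxi
        nlinarith
      have h2 : (0:ℝ) ≤ x ^ (i - 1) := le_of_lt (pow_pos hx0 _)
      rw [hxpow]
      nlinarith
  have hfac : (0:ℝ) < Real.log 2 ^ (i + 1) / (Nat.factorial i) := by
    have := hc
    have : (0:ℝ) < Nat.factorial i := by exact_mod_cast Nat.factorial_pos i
    positivity
  have hexp : (0:ℝ) < Real.exp (-(Real.log 2 * x)) := Real.exp_pos _
  exact mul_nonneg hfac.le (mul_nonneg (by linarith) hexp.le)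

lemma psi_antitoneOn (i : ℕ) {a b : ℝ} (ha0 : 0 ≤ a) (hai : (i : ℝ) / Real.log 2 ≤ a) :
    AntitoneOn (psi i) (Set.Icc a b) := by
  apply antitoneOn_of_deriv_nonpos (convex_Icc _ _) (continuous_psi i).continuousOn
    (fun x _ => ((hasDerivAt_psi i x).differentiableAt).differentiableWithinAt)
  intro x hx
  rw [interior_Icc, Set.mem_Ioo] at hx
  obtain ⟨hax, hxb⟩ := hx
  have hx0 : 0 < x := lt_of_le_of_lt ha0 hax
  rw [deriv_psi]
  have hminus : (i : ℝ) * x ^ (i - 1) ≤ Real.log 2 * x ^ i := by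
    rcases Nat.eq_zero_or_pos i with h | h
    · subst h
      simp
      nlinarith [hc, hc.le]
    · have hxpow : x ^ i = x * x ^ (i - 1) := by
        conv_lhs => rw [show i = 1 + (i - 1) by omega]
        rw [pow_add, pow_one]
      have h1 : (i : ℝ) ≤ Real.log 2 * x := by
        rw [div_le_iff₀ hc] at hai
        calc (i:ℝ) ≤ a * Real.log 2 := hai
        _ ≤ x * Real.log 2 := by nlinarith [hc]
        _ = Real.log 2 * x := mul_comm _ _
      have h2 : (0:ℝ) ≤ x ^ (i - 1) := le_of_lt (pow_pos hx0 _)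
      rw [hxpow]
      nlinarith
  have hfac : (0:ℝ) < Real.log 2 ^ (i + 1) / (Nat.factorial i) := by
    have := hc
    have : (0:ℝ) < Nat.factorial i := by exact_mod_cast Nat.factorial_pos i
    positivity
  have hexp : (0:ℝ) < Real.exp (-(Real.log 2 * x)) := Real.exp_pos _
  have hrw : Real.log 2 ^ (i + 1) / (Nat.factorial i) *
      (((i : ℝ) * x ^ (i - 1) - Real.log 2 * x ^ i) * Real.exp (-(Real.log 2 * x)))
      = -(Real.log 2 ^ (i + 1) / (Nat.factorial i) *
        ((Real.log 2 * x ^ i - (i : ℝ) * x ^ (i - 1)) * Real.exp (-(Real.log 2 * x)))) := by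
    ring
  rw [hrw, neg_nonpos]
  exact mul_nonneg hfac.le (mul_nonneg (by linarith) hexp.le)

/-- global max bound -/
noncomputable def psiMax (i : ℕ) : ℝ :=
  Real.log 2 * ((i : ℝ) ^ i * Real.exp (-(i : ℝ)) / (Nat.factorial i))

lemma pow_mul_exp_le (i : ℕ) {u : ℝ} (hu : 0 ≤ u) :
    u ^ i * Real.exp (-u) ≤ (i : ℝ) ^ i * Real.exp (-(i : ℝ)) := by
  rcases Nat.eq_zero_or_pos i with h | h
  · subst h
    simpa using Real.exp_le_exp.mpr (by linarith : -u ≤ -(0:ℝ))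
  · have hi : (0:ℝ) < i := by exact_mod_cast h
    have key : u ≤ (i : ℝ) * Real.exp (u / i - 1) := by
      have := Real.add_one_le_exp (u / i - 1)
      have h2 : u / i ≤ Real.exp (u / i - 1) := by linarith
      calc u = (i : ℝ) * (u / i) := by field_simp
      _ ≤ (i : ℝ) * Real.exp (u / i - 1) := by nlinarith
    have hpow : u ^ i ≤ ((i : ℝ) * Real.exp (u / i - 1)) ^ i :=
      pow_le_pow_left₀ hu key i
    have hexp : ((i : ℝ) * Real.exp (u / i - 1)) ^ i
        = (i : ℝ) ^ i * Real.exp (u - i) := by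
      rw [mul_pow, ← Real.exp_nat_mul]
      congr 1
      field_simp
    have hpow2 : u ^ i ≤ (i : ℝ) ^ i * Real.exp (u - i) := by rw [← hexp]; exact hpow
    have e1 : (0:ℝ) < Real.exp (-u) := Real.exp_pos _
    calc u ^ i * Real.exp (-u) ≤ (i : ℝ) ^ i * Real.exp (u - i) * Real.exp (-u) := by
          nlinarith
    _ = (i : ℝ) ^ i * Real.exp (-(i:ℝ)) := by
          rw [mul_assoc, ← Real.exp_add]
          congr 1
          ring

lemma psi_le_psiMax (i : ℕ) {t : ℝ} (ht : 0 ≤ t) : psi i t ≤ psiMax i := by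
  unfold psi psiMax
  have h := pow_mul_exp_le i (u := Real.log 2 * t) (by positivity)
  have hfacpos : (0:ℝ) < Nat.factorial i := by exact_mod_cast Nat.factorial_pos i
  rw [div_mul_eq_mul_div, div_le_iff₀ hfacpos]
  have expand : Real.log 2 ^ (i + 1) * (t ^ i * Real.exp (-(Real.log 2 * t)))
      = Real.log 2 * ((Real.log 2 * t) ^ i * Real.exp (-(Real.log 2 * t))) := by
    rw [mul_pow, pow_succ]
    ring
  rw [expand]
  have hrhs : Real.log 2 * ((i : ℝ) ^ i * Real.exp (-(i : ℝ)) / ↑(Nat.factorial i)) * ↑(Nat.factorial i)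
      = Real.log 2 * ((i : ℝ) ^ i * Real.exp (-(i : ℝ))) := by
    field_simp
  rw [hrhs]
  exact mul_le_mul_of_nonneg_left h hc.le

lemma integrableOn_psi (i : ℕ) : IntegrableOn (psi i) (Set.Ioi 0) := by
  have h := integrableOn_rpow_mul_exp_neg_mul_rpow (s := (i:ℝ)) (p := 1) (b := Real.log 2)
    (lt_of_lt_of_le (by norm_num) (Nat.cast_nonneg i)) one_pos hc
  have h2 : IntegrableOn
      (fun x : ℝ => Real.log 2 ^ (i + 1) / (Nat.factorial i) *
        (x ^ (i:ℝ) * Real.exp (-Real.log 2 * x ^ (1:ℝ)))) (Set.Ioi 0) :=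
    h.const_mul _
  apply h2.congr_fun ?_ measurableSet_Ioi
  intro x _
  unfold psi
  simp only [Real.rpow_one, Real.rpow_natCast, neg_mul]

lemma integral_psi (i : ℕ) : ∫ t in Set.Ioi 0, psi i t = 1 := by
  unfold psi
  rw [MeasureTheory.integral_const_mul]
  have key : ∫ t in Set.Ioi 0, t ^ i * Real.exp (-(Real.log 2 * t))
      = (1 / Real.log 2) ^ (i + 1) * ((Nat.factorial i : ℝ)) := by
    have h := Real.integral_rpow_mul_exp_neg_mul_Ioi (a := (i:ℝ) + 1) (r := Real.log 2)
      (by positivity) hc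
    have h2 : ∀ t ∈ Set.Ioi (0:ℝ), t ^ ((i:ℝ) + 1 - 1) * Real.exp (-(Real.log 2 * t))
        = t ^ i * Real.exp (-(Real.log 2 * t)) := by
      intro t _
      rw [add_sub_cancel_right, Real.rpow_natCast]
    rw [MeasureTheory.setIntegral_congr_fun measurableSet_Ioi h2] at h
    rw [h]
    congr 1
    · rw [show ((i:ℝ) + 1) = ((i + 1 : ℕ) : ℝ) by push_cast; ring, Real.rpow_natCast]
    · rw [show ((i:ℝ) + 1) = ((i:ℝ) + 1) from rfl]
      exact_mod_cast Real.Gamma_nat_eq_factorial i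
  rw [key]
  have hfacpos : (0:ℝ) < Nat.factorial i := by exact_mod_cast Nat.factorial_pos i
  field_simp
  rw [← mul_pow, mul_one_div_cancel hc.ne', one_pow]

lemma integral_split (i : ℕ) {a b : ℝ} (ha : 0 ≤ a) (hab : a ≤ b) :
    (∫ t in Set.Ioi a, psi i t)
      = (∫ t in Set.Ioc a b, psi i t) + ∫ t in Set.Ioi b, psi i t := by
  rw [← MeasureTheory.setIntegral_union (Set.Ioc_disjoint_Ioi le_rfl) measurableSet_Ioi
    ((integrableOn_psi i).mono_set (fun x hx => lt_of_le_of_lt ha hx.1))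
    ((integrableOn_psi i).mono_set (Set.Ioi_subset_Ioi (le_trans ha hab))),
    Set.Ioc_union_Ioi_eq_Ioi hab]

lemma setIntegral_psi_nonneg (i : ℕ) {s : Set ℝ} (hm : MeasurableSet s) (hs : s ⊆ Set.Ioi 0) :
    0 ≤ ∫ t in s, psi i t :=
  MeasureTheory.setIntegral_nonneg hm fun t hts => psi_nonneg i (le_of_lt (hs hts))

lemma integral_Ioc_le_psiMax (i : ℕ) {a : ℝ} (ha : 0 ≤ a) :
    ∫ t in Set.Ioc a (a + 1), psi i t ≤ psiMax i := by
  have h1 : ∫ t in Set.Ioc a (a + 1), psi i t ≤ ∫ _ in Set.Ioc a (a + 1), psiMax i := by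
    apply MeasureTheory.setIntegral_mono_on
      (((integrableOn_psi i).mono_set (fun x hx => lt_of_le_of_lt ha hx.1)))
      (MeasureTheory.integrableOn_const (by rw [Real.volume_Ioc]; exact ENNReal.ofReal_ne_top))
      measurableSet_Ioc
    exact fun x hx => psi_le_psiMax i (le_trans ha hx.1.le)
  calc ∫ t in Set.Ioc a (a + 1), psi i t ≤ ∫ _ in Set.Ioc a (a + 1), psiMax i := h1
  _ = psiMax i := by
      rw [MeasureTheory.setIntegral_const, Real.volume_real_Ioc, smul_eq_mul]
      rw [show a + 1 - a = 1 by ring]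
      simp

section main
variable (i : ℕ)

lemma main_bounds (hi : 1 ≤ i) :
    (∀ N : ℕ, ∑ k ∈ Finset.range N, psi i k ≤ 1 + 2 * psiMax i) ∧
    (∀ T : ℝ, HasSum (fun k : ℕ => psi i k) T → 1 - psiMax i ≤ T) := by
  set q : ℕ := ⌊(i : ℝ) / Real.log 2⌋₊ with hqdef
  have hq1 : (q : ℝ) ≤ (i : ℝ) / Real.log 2 := Nat.floor_le (by positivity)
  have hq2 : (i : ℝ) / Real.log 2 < (q : ℝ) + 1 := Nat.lt_floor_add_one _
  have hQ0 : (0:ℝ) ≤ (q : ℝ) := Nat.cast_nonneg q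
  -- monotone piece
  have hmono : MonotoneOn (psi i) (Set.Icc (0:ℝ) (0 + (q:ℕ))) := by
    apply (psi_monotoneOn i).mono
    apply Set.Icc_subset_Icc le_rfl
    rw [zero_add]; exact hq1
  have hA : ∑ k ∈ Finset.range q, psi i k ≤ ∫ x in (0:ℝ)..(q:ℝ), psi i x := by
    have := hmono.sum_le_integral
    simpa using this
  have hA' : ∫ x in (0:ℝ)..(q:ℝ), psi i x ≤ ∑ k ∈ Finset.range q, psi i ((k:ℝ) + 1) := by
    have := hmono.integral_le_sum
    simp only [zero_add] at this
    convert this using 2 with k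
    push_cast
    ring
  -- antitone pieces, for each N
  have hanti : ∀ N : ℕ, AntitoneOn (psi i) (Set.Icc ((q:ℝ) + 1) ((q:ℝ) + 1 + (N:ℕ))) :=
    fun N => psi_antitoneOn i (by linarith) hq2.le
  have hC : ∀ N : ℕ, ∑ n ∈ Finset.range N, psi i ((q:ℝ) + 1 + ((n:ℝ) + 1))
      ≤ ∫ x in ((q:ℝ) + 1)..((q:ℝ) + 1 + (N:ℝ)), psi i x := by
    intro N
    have h := (hanti N).sum_le_integral
    refine le_trans (le_of_eq (Finset.sum_congr rfl fun n _ => ?_)) h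
    congr 1
    push_cast
    ring
  have hC' : ∀ N : ℕ, (∫ x in ((q:ℝ) + 1)..((q:ℝ) + 1 + (N:ℝ)), psi i x)
      ≤ ∑ n ∈ Finset.range N, psi i ((q:ℝ) + 1 + (n:ℝ)) := by
    intro N
    exact (hanti N).integral_le_sum
  -- interval integrals as set integrals
  have hIq : ∫ x in (0:ℝ)..(q:ℝ), psi i x = ∫ t in Set.Ioc (0:ℝ) q, psi i t :=
    intervalIntegral.integral_of_le hQ0
  have hIN : ∀ N : ℕ, (∫ x in ((q:ℝ) + 1)..((q:ℝ) + 1 + (N:ℝ)), psi i x)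
      = ∫ t in Set.Ioc ((q:ℝ) + 1) ((q:ℝ) + 1 + (N:ℝ)), psi i t :=
    fun N => intervalIntegral.integral_of_le (le_add_of_nonneg_right (Nat.cast_nonneg N))
  -- splitting of the total integral
  have hsplit1 : (1:ℝ) = (∫ t in Set.Ioc (0:ℝ) q, psi i t) + ∫ t in Set.Ioi (q:ℝ), psi i t := by
    rw [← integral_psi i, integral_split i le_rfl hQ0]
  have hsplit2 : (∫ t in Set.Ioi (q:ℝ), psi i t)
      = (∫ t in Set.Ioc (q:ℝ) ((q:ℝ)+1), psi i t) + ∫ t in Set.Ioi ((q:ℝ)+1), psi i t :=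
    integral_split i hQ0 (by linarith)
  constructor
  · -- upper bound
    intro N
    have hstep : ∑ k ∈ Finset.range N, psi i k ≤ ∑ k ∈ Finset.range (q + 2 + N), psi i k := by
      apply Finset.sum_le_sum_of_subset_of_nonneg (Finset.range_subset_range.2 (by omega))
      exact fun k _ _ => psi_nonneg i (Nat.cast_nonneg k)
    have hdec : ∑ k ∈ Finset.range (q + 2 + N), psi i k
        = (∑ k ∈ Finset.range q, psi i k) + psi i q + psi i ((q:ℝ)+1)
          + ∑ n ∈ Finset.range N, psi i ((q:ℝ) + 1 + ((n:ℝ) + 1)) := by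
      rw [Finset.sum_range_add, Finset.sum_range_succ, Finset.sum_range_succ]
      rw [show ((q + 1 : ℕ) : ℝ) = (q:ℝ) + 1 by push_cast; ring]
      congr 1
      exact Finset.sum_congr rfl fun n _ => by congr 1; push_cast; ring
    have htail : ∑ n ∈ Finset.range N, psi i ((q:ℝ) + 1 + ((n:ℝ) + 1))
        ≤ ∫ t in Set.Ioi (q:ℝ), psi i t := by
      refine le_trans (hC N) ?_
      rw [hIN N]
      apply MeasureTheory.setIntegral_mono_set
        ((integrableOn_psi i).mono_set (Set.Ioi_subset_Ioi hQ0))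
        ?_ ?_
      · rw [Filter.EventuallyLE]
        rw [MeasureTheory.ae_restrict_iff' measurableSet_Ioi]
        filter_upwards with x hx
        exact psi_nonneg i (le_of_lt (lt_of_le_of_lt hQ0 hx))
      · apply HasSubset.Subset.eventuallyLE
        intro x hx
        exact lt_trans (by linarith) hx.1
    have hmid1 : psi i (q:ℝ) ≤ psiMax i := psi_le_psiMax i hQ0
    have hmid2 : psi i ((q:ℝ)+1) ≤ psiMax i := psi_le_psiMax i (by linarith)
    calc ∑ k ∈ Finset.range N, psi i k
        ≤ (∑ k ∈ Finset.range q, psi i k) + psi i q + psi i ((q:ℝ)+1)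
          + ∑ n ∈ Finset.range N, psi i ((q:ℝ) + 1 + ((n:ℝ) + 1)) := by rw [← hdec]; exact hstep
      _ ≤ (∫ t in Set.Ioc (0:ℝ) q, psi i t) + psiMax i + psiMax i
          + ∫ t in Set.Ioi (q:ℝ), psi i t := by
          refine add_le_add (add_le_add (add_le_add ?_ hmid1) hmid2) htail
          rw [← hIq]; exact hA
      _ ≤ 1 + 2 * psiMax i := by linarith [hsplit1]
  · -- lower bound
    intro T hT
    have hlimit : Filter.Tendsto
        (fun N : ℕ => (∫ t in Set.Ioc (0:ℝ) q, psi i t)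
          + ∫ x in ((q:ℝ) + 1)..((q:ℝ) + 1 + (N:ℝ)), psi i x) Filter.atTop
        (nhds ((∫ t in Set.Ioc (0:ℝ) q, psi i t) + ∫ t in Set.Ioi ((q:ℝ)+1), psi i t)) := by
      apply Filter.Tendsto.const_add
      apply MeasureTheory.intervalIntegral_tendsto_integral_Ioi ((q:ℝ) + 1)
        ((integrableOn_psi i).mono_set (Set.Ioi_subset_Ioi (by linarith)))
      exact Filter.tendsto_atTop_add_const_left _ _ tendsto_natCast_atTop_atTop
    have hbound : ∀ N : ℕ, (∫ t in Set.Ioc (0:ℝ) q, psi i t)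
        + (∫ x in ((q:ℝ) + 1)..((q:ℝ) + 1 + (N:ℝ)), psi i x) ≤ T := by
      intro N
      have hsum_le_T : ∑ k ∈ Finset.range (q + 1 + N), psi i k ≤ T := by
        apply sum_le_hasSum _ (fun k _ => psi_nonneg i (Nat.cast_nonneg k)) hT
      have hdec : (∑ k ∈ Finset.range q, psi i ((k:ℝ) + 1))
            + ∑ n ∈ Finset.range N, psi i ((q:ℝ) + 1 + (n:ℝ))
          ≤ ∑ k ∈ Finset.range (q + 1 + N), psi i k := by
        rw [Finset.sum_range_add, Finset.sum_range_succ']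
        have h0 : 0 ≤ psi i ((0:ℕ):ℝ) := psi_nonneg i (by norm_num)
        have hterm1 : ∑ k ∈ Finset.range q, psi i ((k:ℝ) + 1)
            = ∑ k ∈ Finset.range q, psi i ((k + 1 : ℕ)) := by
          refine Finset.sum_congr rfl fun k _ => by congr 1; push_cast; ring
        have hterm2 : ∑ n ∈ Finset.range N, psi i ((q:ℝ) + 1 + (n:ℝ))
            = ∑ n ∈ Finset.range N, psi i ((q + 1 + n : ℕ)) := by
          refine Finset.sum_congr rfl fun n _ => by congr 1; push_cast; ring
        rw [hterm1, hterm2]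
        linarith [h0]
      refine le_trans ?_ hsum_le_T
      refine le_trans (add_le_add ?_ (hC' N)) hdec
      rw [← hIq]
      exact hA'
    have hfinal := le_of_tendsto hlimit (Filter.Eventually.of_forall hbound)
    have hmid : (∫ t in Set.Ioc (q:ℝ) ((q:ℝ)+1), psi i t) ≤ psiMax i := integral_Ioc_le_psiMax i hQ0
    linarith [hfinal, hmid, hsplit1, hsplit2]
end main

lemma psiMax_eq (i : ℕ) (hi : 1 ≤ i) :
    psiMax i = Real.log 2 / (Real.sqrt (2 * i) * Stirling.stirlingSeq i) := by
  have hi' : (0:ℝ) < i := by exact_mod_cast hi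
  have hfac : (0:ℝ) < Nat.factorial i := by exact_mod_cast Nat.factorial_pos i
  have hsq : (0:ℝ) < Real.sqrt (2 * i) := Real.sqrt_pos.2 (by positivity)
  have hpow : (0:ℝ) < ((i:ℝ) / Real.exp 1) ^ i := by positivity
  have key : ((i:ℝ) / Real.exp 1) ^ i = (i:ℝ) ^ i * Real.exp (-(i:ℝ)) := by
    rw [div_pow, ← Real.exp_nat_mul, mul_one, Real.exp_neg, div_eq_mul_inv]
  unfold psiMax Stirling.stirlingSeq
  rw [← key]
  field_simp

lemma psiMax_tendsto : Filter.Tendsto psiMax Filter.atTop (nhds 0) := by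
  have h2i : Filter.Tendsto (fun i : ℕ => (2 * i : ℝ)) Filter.atTop Filter.atTop := by
    apply Filter.Tendsto.const_mul_atTop two_pos
    exact tendsto_natCast_atTop_atTop
  have hsqrt : Filter.Tendsto (fun i : ℕ => Real.sqrt (2 * i)) Filter.atTop Filter.atTop := by
    have := (tendsto_rpow_atTop (y := (1:ℝ)/2) (by norm_num)).comp h2i
    apply this.congr
    intro i
    simp only [Function.comp_apply]
    rw [Real.sqrt_eq_rpow]
  have hstir := Stirling.tendsto_stirlingSeq_sqrt_pi
  have hD : Filter.Tendsto (fun i : ℕ => Real.sqrt (2 * i) * Stirling.stirlingSeq i)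
      Filter.atTop Filter.atTop :=
    Filter.Tendsto.atTop_mul_pos (Real.sqrt_pos.2 Real.pi_pos) hsqrt hstir
  have h0 : Filter.Tendsto (fun i : ℕ => Real.log 2 / (Real.sqrt (2 * i) * Stirling.stirlingSeq i))
      Filter.atTop (nhds 0) :=
    Filter.Tendsto.div_atTop tendsto_const_nhds hD
  apply h0.congr'
  filter_upwards [Filter.eventually_ge_atTop 1] with i hi
  exact (psiMax_eq i hi).symm

lemma exp_neg_log2 (k : ℕ) :
    Real.exp (-(Real.log 2 * k)) = 2 * (1 / 2 : ℝ) ^ (k + 1) := by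
  have h : Real.exp (-(Real.log 2 * k)) = Real.exp (-Real.log 2) ^ k := by
    rw [← Real.exp_nat_mul]; congr 1; ring
  rw [h, Real.exp_neg, Real.exp_log two_pos, pow_succ]
  ring

lemma hasSum_psi (i : ℕ) :
    HasSum (fun k : ℕ => psi i k)
      (2 * (orderedBell i : ℝ) * Real.log 2 ^ (i + 1) / (Nat.factorial i : ℝ)) := by
  have h := (hasSum_orderedBell i).mul_left (2 * Real.log 2 ^ (i + 1) / (Nat.factorial i : ℝ))
  have he : ∀ k : ℕ, 2 * Real.log 2 ^ (i + 1) / (Nat.factorial i : ℝ)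
      * ((k : ℝ) ^ i * (1 / 2) ^ (k + 1)) = psi i k := by
    intro k
    unfold psi
    rw [exp_neg_log2 k]
    ring
  rw [show 2 * Real.log 2 ^ (i + 1) / (Nat.factorial i : ℝ) * (orderedBell i : ℝ)
    = 2 * (orderedBell i : ℝ) * Real.log 2 ^ (i + 1) / (Nat.factorial i : ℝ) by ring] at h
  simp only [he] at h
  exact h


/-- Barthélémy's asymptotic for the ordered Bell numbers: `F_i ~ i!/(2·(ln 2)^{i+1})`,
i.e. `2·F_i·(ln 2)^{i+1}/i! → 1` as `i → ∞`. -/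
theorem orderedBell_asymptotics :
    Filter.Tendsto
      (fun i : ℕ => 2 * (orderedBell i : ℝ) * (Real.log 2) ^ (i + 1) / (Nat.factorial i : ℝ))
      Filter.atTop (nhds 1) := by
  apply tendsto_of_tendsto_of_tendsto_of_le_of_le'
    (g := fun i : ℕ => 1 - psiMax i) (h := fun i : ℕ => 1 + 2 * psiMax i)
  · simpa using (tendsto_const_nhds (x := (1:ℝ))).sub psiMax_tendsto
  · have := (tendsto_const_nhds (x := (1:ℝ))).add (psiMax_tendsto.const_mul 2)
    simpa using this
  · filter_upwards [Filter.eventually_ge_atTop 1] with i hi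
    exact (main_bounds i hi).2 _ (hasSum_psi i)
  · filter_upwards [Filter.eventually_ge_atTop 1] with i hi
    have hT := hasSum_psi i
    rw [← hT.tsum_eq]
    exact Summable.tsum_le_of_sum_range_le hT.summable (main_bounds i hi).1
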